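/- Let k be a commutative ring, m a natural number, and a : Fin m → ℕ with aᵢ ≥ 1 for every i. Let φ : MvPolynomial (Fin m) k → MvPolynomial (Fin m) k be the k-algebra homomorphism determined by φ(Xᵢ) = Xᵢ^{aᵢ} for each i. Then MvPolynomial (Fin m) k, regarded as a module over itself via restriction of scalars along φ, is a flat module. -/

import Mathlib

open MvPolynomial

noncomputable section PowAux

variable (k : Type*) [CommRing k] (m : ℕ) (a : Fin m → ℕ)

/-- Type synonym for the polynomial ring viewed as a module over itself via the power map. -/
def PowM (_a : Fin m → ℕ) : Type _ := MvPolynomial (Fin m) k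

instance : AddCommGroup (PowM k m a) := inferInstanceAs (AddCommGroup (MvPolynomial (Fin m) k))

instance powMModule : Module (MvPolynomial (Fin m) k) (PowM k m a) :=
  Module.compHom (MvPolynomial (Fin m) k)
    (MvPolynomial.aeval (fun i => MvPolynomial.X i ^ a i) :
      MvPolynomial (Fin m) k →ₐ[k] MvPolynomial (Fin m) k).toRingHom

/-- Cast from the polynomial ring to the module synonym. -/
def PowM.of : MvPolynomial (Fin m) k → PowM k m a := id

variable (ha : ∀ i, 1 ≤ a i)

/-- The digit-decomposition bijection on exponent vectors. -/
def powE : ((∀ i, Fin (a i)) × (Fin m →₀ ℕ)) ≃ (Fin m →₀ ℕ) where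
  toFun rq := Finsupp.equivFunOnFinite.symm fun i => a i * rq.2 i + (rq.1 i : ℕ)
  invFun d := (fun i => ⟨d i % a i, Nat.mod_lt _ (ha i)⟩,
               Finsupp.equivFunOnFinite.symm fun i => d i / a i)
  left_inv := by
    rintro ⟨r, q⟩
    refine Prod.ext (funext fun i => Fin.ext ?_) (Finsupp.ext fun i => ?_) <;>
      simp [Nat.mul_add_mod, Nat.mod_eq_of_lt (r _).isLt, Nat.mul_add_div (ha _),
        Nat.div_eq_of_lt (r _).isLt]
  right_inv := by
    intro d
    refine Finsupp.ext fun i => ?_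
    simp [Nat.div_add_mod]

include ha in
lemma aeval_pow_monomial (d : Fin m →₀ ℕ) (c : k) :
    MvPolynomial.aeval (fun i => MvPolynomial.X i ^ a i) (MvPolynomial.monomial d c)
      = MvPolynomial.monomial (Finsupp.equivFunOnFinite.symm fun i => a i * d i) c := by
  set s : Fin m →₀ ℕ := Finsupp.equivFunOnFinite.symm fun i => a i * d i with hs
  have hsapp : ∀ i, s i = a i * d i := fun i => rfl
  have hsupp : s.support = d.support := by
    ext i
    simp only [Finsupp.mem_support_iff, hsapp, Nat.mul_ne_zero_iff]
    exact ⟨fun h => h.2, fun h => ⟨Nat.one_le_iff_ne_zero.mp (ha i), h⟩⟩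
  rw [aeval_monomial]
  have h2 : (d.prod fun i n => (MvPolynomial.X i ^ a i : MvPolynomial (Fin m) k) ^ n)
      = MvPolynomial.monomial s 1 := by
    rw [← MvPolynomial.prod_X_pow_eq_monomial, hsupp, Finsupp.prod]
    exact Finset.prod_congr rfl fun i _ => by rw [← pow_mul, hsapp]
  rw [h2, MvPolynomial.algebraMap_eq, MvPolynomial.C_mul_monomial, mul_one]

/-- The main linear map, sending `single r p` to `φ(p) · Xʳ`. -/
def powT : ((∀ i, Fin (a i)) →₀ MvPolynomial (Fin m) k) →ₗ[MvPolynomial (Fin m) k] PowM k m a :=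
  Finsupp.lsum ℕ fun r =>
    { toFun := fun p => PowM.of k m a
        (MvPolynomial.aeval (fun i => MvPolynomial.X i ^ a i) p *
          MvPolynomial.monomial (Finsupp.equivFunOnFinite.symm fun i => ((r i : ℕ))) 1)
      map_add' := fun p q => by
        change MvPolynomial.aeval (fun i => MvPolynomial.X i ^ a i) (p + q) * _
          = MvPolynomial.aeval (fun i => MvPolynomial.X i ^ a i) p * _
            + MvPolynomial.aeval (fun i => MvPolynomial.X i ^ a i) q * _
        rw [map_add]; exact add_mul (R := MvPolynomial (Fin m) k) _ _ _
      map_smul' := fun c p => by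
        change MvPolynomial.aeval (fun i => MvPolynomial.X i ^ a i) (c * p) * _
          = MvPolynomial.aeval (fun i => MvPolynomial.X i ^ a i) c
            * (MvPolynomial.aeval (fun i => MvPolynomial.X i ^ a i) p * _)
        rw [map_mul]; exact mul_assoc (G := MvPolynomial (Fin m) k) _ _ _ }

/-- The bijection underlying `powT`, as an additive equivalence. -/
def powC : ((∀ i, Fin (a i)) →₀ MvPolynomial (Fin m) k) ≃+ PowM k m a :=
  ((Finsupp.mapRange.addEquiv AddMonoidAlgebra.coeffAddEquiv).trans
  (((Finsupp.finsuppProdLEquiv k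
        (α := ∀ i, Fin (a i)) (β := Fin m →₀ ℕ) (M := k)).symm.toAddEquiv.trans
      (Finsupp.domCongr (powE m a ha))) : _ ≃+ ((Fin m →₀ ℕ) →₀ k))).trans
    AddMonoidAlgebra.coeffAddEquiv.symm

lemma powT_single_monomial (r : ∀ i, Fin (a i)) (d : Fin m →₀ ℕ) (c : k) :
    powT k m a (Finsupp.single r (MvPolynomial.monomial d c))
      = powC k m a ha (Finsupp.single r (MvPolynomial.monomial d c)) := by
  have hL : powT k m a (Finsupp.single r (MvPolynomial.monomial d c))
      = PowM.of k m a (MvPolynomial.monomial (powE m a ha (r, d)) c) := by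
    rw [powT, Finsupp.lsum_single]
    simp only [LinearMap.coe_mk, AddHom.coe_mk]
    refine congrArg (PowM.of k m a) ?_
    rw [aeval_pow_monomial k m a ha, MvPolynomial.monomial_mul, mul_one]
    have he : (Finsupp.equivFunOnFinite.symm fun i => a i * d i)
        + Finsupp.equivFunOnFinite.symm (fun i => ((r i : ℕ))) = powE m a ha (r, d) := by
      ext i
      simp [powE, Finsupp.add_apply]
    rw [he]
  have hR : powC k m a ha (Finsupp.single r (MvPolynomial.monomial d c))
      = PowM.of k m a (MvPolynomial.monomial (powE m a ha (r, d)) c) := by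
    have h0 : (Finsupp.mapRange.addEquiv AddMonoidAlgebra.coeffAddEquiv)
        (Finsupp.single r (MvPolynomial.monomial d c)) = Finsupp.single r (Finsupp.single d c) := by
      rw [Finsupp.mapRange.addEquiv_apply, Finsupp.mapRange_single]; rfl
    show AddMonoidAlgebra.ofCoeff (Finsupp.equivMapDomain (powE m a ha)
        ((Finsupp.finsuppProdLEquiv k).symm ((Finsupp.mapRange.addEquiv
          AddMonoidAlgebra.coeffAddEquiv) (Finsupp.single r (MvPolynomial.monomial d c)))))
      = AddMonoidAlgebra.ofCoeff (Finsupp.single (powE m a ha (r, d)) c)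
    rw [h0]
    have h1 : ((Finsupp.finsuppProdLEquiv k).symm (Finsupp.single r (Finsupp.single d c)))
        = Finsupp.single (r, d) c := by
      ext ⟨x, y⟩
      rw [show ((Finsupp.finsuppProdLEquiv k).symm (Finsupp.single r (Finsupp.single d c))) (x, y)
        = Finsupp.single r (Finsupp.single d c) x y from rfl]
      by_cases h : r = x <;> simp [h, Finsupp.single_apply, Prod.ext_iff]
    rw [h1, Finsupp.equivMapDomain_single]
  rw [hL, hR]

lemma powT_eq (x : (∀ i, Fin (a i)) →₀ MvPolynomial (Fin m) k) :
    powT k m a x = powC k m a ha x := by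
  induction x using Finsupp.induction with
  | zero => rw [map_zero, map_zero]
  | single_add r p f _ hb ih =>
    rw [map_add, map_add, ih]
    congr 1
    clear hb
    induction p using MvPolynomial.induction_on' with
    | monomial d c => exact powT_single_monomial k m a ha r d c
    | add p q hp hq => rw [Finsupp.single_add, map_add, map_add, hp, hq]

end PowAux

/-- Let `k` be a commutative ring and `φ : k[X₁,…,Xₘ] → k[X₁,…,Xₘ]` the
`k`-algebra homomorphism with `φ(Xᵢ) = Xᵢ^{aᵢ}` where each `aᵢ ≥ 1`.  Then the
polynomial ring, viewed as a module over itself by restriction of scalars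
along `φ`, is flat. -/
theorem flat_of_power_map
    (k : Type*) [CommRing k] (m : ℕ) (a : Fin m → ℕ) (ha : ∀ i, 1 ≤ a i) :
    @Module.Flat (MvPolynomial (Fin m) k) (MvPolynomial (Fin m) k) _ _
      (Module.compHom (MvPolynomial (Fin m) k)
        (MvPolynomial.aeval (fun i => MvPolynomial.X i ^ a i) :
          MvPolynomial (Fin m) k →ₐ[k] MvPolynomial (Fin m) k).toRingHom) := by
  have hbij : Function.Bijective (powT k m a) := by
    have h : ⇑(powT k m a) = ⇑(powC k m a ha) := funext (powT_eq k m a ha)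
    rw [h]
    exact (powC k m a ha).bijective
  have hflat : Module.Flat (MvPolynomial (Fin m) k) (PowM k m a) :=
    Module.Flat.of_linearEquiv (LinearEquiv.ofBijective (powT k m a) hbij).symm
  exact hflat
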